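/- Let F be a cumulative distribution function with hazard rate h on [t₀,∞) satisfying condition (BasicH). Let K be a cumulative distribution function on ℝ such that K̄(t) ≤ M·F̄(t) for some M > 0 and all t large enough (i.e. K̄ = O(F̄)). Then for all nonnegative integers j and n, t^n · ∫_{[t/2,∞)} x^j dK(x) → 0 as t → ∞. -/

import Mathlib

open MeasureTheory Filter Set

noncomputable section

/-- `h` is a hazard rate for the upper tail of `F` on `[t₀, ∞)`:
`F̄(t₀) > 0`, `h` is nonnegative and locally integrable on `[t₀, ∞)`, and
`F̄(t) = F̄(t₀) · exp(−∫_{t₀}^t h(u) du)` for all `t ≥ t₀`. -/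
def HasHazardRate (F h : ℝ → ℝ) (t₀ : ℝ) : Prop :=
  0 < 1 - F t₀ ∧ (∀ t, t₀ ≤ t → 0 ≤ h t) ∧
    MeasureTheory.LocallyIntegrableOn h (Set.Ici t₀) ∧
    ∀ t, t₀ ≤ t → 1 - F t = (1 - F t₀) * Real.exp (-(∫ u in t₀..t, h u))

/-- `g`, positive on a neighborhood of `∞`, is regularly varying of index `ρ`:
for every `a > 0`, `g(at)/g(t) → a^ρ` as `t → ∞`. -/
def RegularlyVarying (g : ℝ → ℝ) (ρ : ℝ) : Prop :=
  (∀ᶠ t in Filter.atTop, 0 < g t) ∧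
    ∀ a : ℝ, 0 < a →
      Filter.Tendsto (fun t => g (a * t) / g t) Filter.atTop (nhds (a ^ ρ))

/-- `g` is smoothly varying of index `α` and order `m`: `g` is `m` times continuously
differentiable on a neighborhood of `∞` and `g^(m)` is regularly varying of index `α − m`. -/
def SmoothlyVarying (g : ℝ → ℝ) (α : ℝ) (m : ℕ) : Prop :=
  (∃ T : ℝ, ContDiffOn ℝ (m : ℕ∞) g (Set.Ici T)) ∧
    RegularlyVarying (iteratedDeriv m g) (α - m)

/-- Condition (BasicH): `h` is regularly varying of some index, `t·h(t) → ∞`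
and `h(t) → 0` as `t → ∞`. -/
def BasicH (h : ℝ → ℝ) : Prop :=
  (∃ ρ : ℝ, RegularlyVarying h ρ) ∧
    Filter.Tendsto (fun t => t * h t) Filter.atTop Filter.atTop ∧
    Filter.Tendsto h Filter.atTop (nhds 0)

/-- `F` is a cumulative distribution function on `ℝ`. -/
def IsCDF (F : ℝ → ℝ) : Prop :=
  Monotone F ∧ (∀ x, ContinuousWithinAt F (Set.Ici x) x) ∧
    Filter.Tendsto F Filter.atBot (nhds 0) ∧ Filter.Tendsto F Filter.atTop (nhds 1)

lemma Ftail (F h : ℝ → ℝ) (t₀ : ℝ) (hh : HasHazardRate F h t₀)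
    (hb : Tendsto (fun t => t * h t) atTop atTop) (m : ℕ) :
    ∃ C > 0, ∀ᶠ t in atTop, 1 - F t ≤ C / t ^ m := by
  obtain ⟨hF0, hpos, hloc, heq⟩ := hh
  obtain ⟨a, ha⟩ := eventually_atTop.1 (hb.eventually_ge_atTop (m : ℝ))
  set t₁ : ℝ := max a (max t₀ 1) with ht₁def
  have ht₀t₁ : t₀ ≤ t₁ := le_trans (le_max_left _ _) (le_max_right _ _)
  have h1t₁ : (1:ℝ) ≤ t₁ := le_trans (le_max_right _ _) (le_max_right _ _)
  have ht₁pos : (0:ℝ) < t₁ := lt_of_lt_of_le one_pos h1t₁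
  have hInt : ∀ b c, t₀ ≤ b → b ≤ c → IntervalIntegrable h volume b c := by
    intro b c hb hbc
    have : IntegrableOn h (Icc b c) volume := by
      refine hloc.integrableOn_compact_subset ?_ isCompact_Icc
      exact fun x hx => le_trans hb hx.1
    rw [intervalIntegrable_iff_integrableOn_Icc_of_le hbc]
    exact this
  refine ⟨(1 - F t₀) * t₁ ^ m, by positivity, ?_⟩
  filter_upwards [eventually_ge_atTop t₁] with t ht
  have htpos : (0:ℝ) < t := lt_of_lt_of_le ht₁pos ht
  have hsplit : (∫ u in t₀..t₁, h u) + ∫ u in t₁..t, h u = ∫ u in t₀..t, h u :=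
    intervalIntegral.integral_add_adjacent_intervals (hInt _ _ le_rfl ht₀t₁)
      (hInt _ _ ht₀t₁ ht)
  have h1 : (0:ℝ) ≤ ∫ u in t₀..t₁, h u :=
    intervalIntegral.integral_nonneg ht₀t₁ (fun u hu => hpos u hu.1)
  have h2 : (m:ℝ) * (Real.log t - Real.log t₁) ≤ ∫ u in t₁..t, h u := by
    have hcont : ContinuousOn (fun u : ℝ => (m:ℝ) / u) (Icc t₁ t) := by
      apply ContinuousOn.div continuousOn_const continuousOn_id
      intro x hx; exact ne_of_gt (lt_of_lt_of_le ht₁pos hx.1)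
    have hIi : IntervalIntegrable (fun u : ℝ => (m:ℝ) / u) volume t₁ t := by
      apply hcont.intervalIntegrable_of_Icc ht
    have hmono : ∫ u in t₁..t, (m:ℝ) / u ≤ ∫ u in t₁..t, h u := by
      refine intervalIntegral.integral_mono_on ht hIi (hInt _ _ ht₀t₁ ht) ?_
      intro u hu
      have hu1 : (1:ℝ) ≤ u := le_trans h1t₁ hu.1
      have hupos : (0:ℝ) < u := lt_of_lt_of_le one_pos hu1
      have := ha u (le_trans (le_max_left _ _) hu.1)
      rw [div_le_iff₀ hupos]
      linarith [this]
    have h0 : (0:ℝ) ∉ uIcc t₁ t := by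
      rw [uIcc_of_le ht]
      intro hc
      exact absurd hc.1 (not_le.2 ht₁pos)
    have hval : ∫ u in t₁..t, (m:ℝ) / u = (m:ℝ) * (Real.log t - Real.log t₁) := by
      simp only [div_eq_mul_inv]
      rw [intervalIntegral.integral_const_mul, integral_inv h0,
        Real.log_div (ne_of_gt htpos) (ne_of_gt ht₁pos)]
    rw [← hval]; exact hmono
  -- now conclude
  have hIle : (m:ℝ) * (Real.log t - Real.log t₁) ≤ ∫ u in t₀..t, h u := by
    rw [← hsplit]; linarith
  have hexp : Real.exp (-(∫ u in t₀..t, h u)) ≤ t₁ ^ m / t ^ m := by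
    have : Real.exp (-(∫ u in t₀..t, h u)) ≤
        Real.exp (-((m:ℝ) * (Real.log t - Real.log t₁))) :=
      Real.exp_le_exp.2 (by linarith)
    refine this.trans ?_
    have : Real.exp (-((m:ℝ) * (Real.log t - Real.log t₁)))
        = (Real.exp (Real.log t₁)) ^ m / (Real.exp (Real.log t)) ^ m := by
      rw [← Real.exp_nat_mul, ← Real.exp_nat_mul, ← Real.exp_sub]
      ring_nf
    rw [this, Real.exp_log htpos, Real.exp_log ht₁pos]
  rw [heq t (le_trans ht₀t₁ ht)]
  calc (1 - F t₀) * Real.exp (-(∫ u in t₀..t, h u)) ≤ (1 - F t₀) * (t₁ ^ m / t ^ m) := by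
        exact mul_le_mul_of_nonneg_left hexp (le_of_lt hF0)
    _ = (1 - F t₀) * t₁ ^ m / t ^ m := by ring

lemma mem_dyadic {a x : ℝ} (ha : 0 < a) (hx : a ≤ x) :
    ∃ k : ℕ, x ∈ Icc (2 ^ k * a) (2 ^ (k + 1) * a) := by
  have hex : ∃ k : ℕ, x < 2 ^ (k + 1) * a := by
    obtain ⟨n, hn⟩ := pow_unbounded_of_one_lt (x / a) (one_lt_two (α := ℝ))
    refine ⟨n, ?_⟩
    have : x < 2 ^ n * a := by
      rw [div_lt_iff₀ ha] at hn; linarith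
    refine this.trans_le ?_
    have : (2:ℝ) ^ n ≤ 2 ^ (n + 1) := by
      apply pow_le_pow_right₀ (by norm_num) (by omega)
    nlinarith
  classical
  refine ⟨Nat.find hex, ?_, le_of_lt (Nat.find_spec hex)⟩
  rcases Nat.eq_zero_or_pos (Nat.find hex) with h0 | hpos
  · rw [h0]; simpa using hx
  · have := Nat.find_min hex (m := Nat.find hex - 1) (by omega)
    push_neg at this
    have heq : Nat.find hex - 1 + 1 = Nat.find hex := by omega
    rwa [heq] at this


/-- if `h` satisfies (BasicH) and `K̄ = O(F̄)`, then for all nonnegative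
integers `j`, `n`, one has `t^n · ∫_{[t/2,∞)} x^j dK(x) → 0` as `t → ∞`. -/
theorem stmt_11 (F h : ℝ → ℝ) (t₀ : ℝ) (hF : IsCDF F)
    (hh : HasHazardRate F h t₀) (hb : BasicH h)
    (μK : Measure ℝ) [IsProbabilityMeasure μK]
    (M : ℝ) (hM : 0 < M)
    (hK : ∀ᶠ t in Filter.atTop, (μK (Set.Ioi t)).toReal ≤ M * (1 - F t)) :
    ∀ j n : ℕ,
      Filter.Tendsto
        (fun t : ℝ => ENNReal.ofReal (t ^ n) * ∫⁻ x in Set.Ici (t / 2), ENNReal.ofReal (x ^ j) ∂μK)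
        Filter.atTop (nhds 0) := by
  intro j n
  set m : ℕ := n + j + 2 with hm
  obtain ⟨C, hC, hCb⟩ := Ftail F h t₀ hh hb.2.1 m
  have hμ : ∀ᶠ s in atTop, μK (Ioi s) ≤ ENNReal.ofReal (M * C / s ^ m) := by
    filter_upwards [hK, hCb] with s h1 h2
    have hfin : μK (Ioi s) ≠ ⊤ := measure_ne_top μK _
    rw [← ENNReal.ofReal_toReal hfin]
    apply ENNReal.ofReal_le_ofReal
    calc (μK (Ioi s)).toReal ≤ M * (1 - F s) := h1
      _ ≤ M * (C / s ^ m) := mul_le_mul_of_nonneg_left h2 hM.le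
      _ = M * C / s ^ m := by ring
  obtain ⟨T₀, hT₀⟩ := eventually_atTop.1 hμ
  set T : ℝ := max T₀ 1 with hTdef
  set E : ℝ := 2 * (M * C) * 2 ^ (j + m) * 2 ^ m with hE
  set r : ℝ := (1/2 : ℝ) ^ (n + 2) with hrdef
  have hr0 : 0 < r := by positivity
  have hrhalf : r ≤ 1/2 := by
    rw [hrdef]
    calc ((1:ℝ)/2) ^ (n+2) ≤ (1/2) ^ 1 :=
        pow_le_pow_of_le_one (by norm_num) (by norm_num) (by omega)
      _ = 1/2 := pow_one _
  have hr1 : r < 1 := lt_of_le_of_lt hrhalf (by norm_num)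
  have key : ∀ᶠ t in atTop,
      ENNReal.ofReal (t ^ n) * ∫⁻ x in Ici (t / 2), ENNReal.ofReal (x ^ j) ∂μK
        ≤ ENNReal.ofReal (E / t ^ 2) := by
    filter_upwards [eventually_ge_atTop (4 * T), eventually_ge_atTop 4] with t ht4T ht4
    set a : ℝ := t / 2 with hadef
    have htpos : (0:ℝ) < t := by linarith
    have hT1 : (1:ℝ) ≤ T := le_max_right _ _
    have haT : T ≤ a / 2 := by rw [hadef]; linarith
    have hapos : (0:ℝ) < a := by rw [hadef]; linarith
    set D : ℝ := M * C * 2 ^ (j + m) * a ^ j / a ^ m with hDdef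
    have hD0 : 0 ≤ D := by positivity
    -- per-piece bound
    have piece : ∀ k : ℕ,
        ∫⁻ x in Icc (2 ^ k * a) (2 ^ (k + 1) * a), ENNReal.ofReal (x ^ j) ∂μK
          ≤ ENNReal.ofReal (D * r ^ k) := by
      intro k
      set b : ℝ := 2 ^ k * a with hbdef
      have h1b : (1:ℝ) ≤ 2 ^ k := one_le_pow₀ (by norm_num)
      have hbpos : (0:ℝ) < b := by positivity
      have hstep1 : ∫⁻ x in Icc (2 ^ k * a) (2 ^ (k + 1) * a), ENNReal.ofReal (x ^ j) ∂μK
          ≤ ENNReal.ofReal ((2 * b) ^ j) * μK (Icc b (2 * b)) := by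
        have hub : (2:ℝ) ^ (k + 1) * a = 2 * b := by rw [hbdef, pow_succ]; ring
        rw [hub, ← setLIntegral_const]
        apply setLIntegral_mono measurable_const
        intro x hx
        exact ENNReal.ofReal_le_ofReal
          (pow_le_pow_left₀ (le_trans hbpos.le hx.1) hx.2 j)
      have hstep2 : μK (Icc b (2 * b)) ≤ ENNReal.ofReal (M * C / (b / 2) ^ m) := by
        refine le_trans (measure_mono ?_) (hT₀ (b / 2) ?_)
        · intro x hx
          have : b / 2 < b := by linarith
          exact lt_of_lt_of_le this hx.1
        · have : a / 2 ≤ b / 2 := by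
            rw [hbdef]; nlinarith
          exact le_trans (le_trans (le_max_left _ _) haT) this
      refine le_trans (le_trans hstep1 (mul_le_mul_right hstep2 _)) ?_
      rw [← ENNReal.ofReal_mul (by positivity)]
      apply ENNReal.ofReal_le_ofReal
      apply le_of_eq
      have hkm : k * m = k * j + k * (n + 2) := by rw [hm]; ring
      have hbm : b ^ m = (2:ℝ) ^ (k * j) * (2:ℝ) ^ (k * (n + 2)) * a ^ m := by
        rw [hbdef, mul_pow, ← pow_mul, hkm, pow_add]
      have hbj : (2 * b) ^ j = 2 ^ j * (2:ℝ) ^ (k * j) * a ^ j := by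
        rw [hbdef, mul_pow, mul_pow, ← pow_mul]; ring
      have hrk : r ^ k = ((2:ℝ) ^ (k * (n + 2)))⁻¹ := by
        rw [hrdef, ← pow_mul, Nat.mul_comm (n+2) k, one_div, inv_pow]
      have hbhalf : (b / 2) ^ m = 2 ^ (k * j) * 2 ^ (k * (n + 2)) * a ^ m / 2 ^ m := by
        rw [div_pow, hbm]
      rw [hbj, hbhalf, hrk, hDdef, hm]
      have h2kj : (0:ℝ) < (2:ℝ) ^ (k * j) := by positivity
      have h2kn : (0:ℝ) < (2:ℝ) ^ (k * (n + 2)) := by positivity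
      have ham : (0:ℝ) < a ^ (n + j + 2) := by positivity
      have h2jm : ((2:ℝ) ^ (j + (n + j + 2)) : ℝ) = 2 ^ j * 2 ^ (n + j + 2) := by
        rw [pow_add]
      field_simp
      ring
    -- sum the pieces
    have hsub : Ici a ⊆ ⋃ k : ℕ, Icc (2 ^ k * a) (2 ^ (k + 1) * a) := by
      intro x hx
      exact mem_iUnion.2 (mem_dyadic hapos hx)
    have hsum : ∫⁻ x in Ici a, ENNReal.ofReal (x ^ j) ∂μK ≤ ENNReal.ofReal (2 * D) := by
      calc ∫⁻ x in Ici a, ENNReal.ofReal (x ^ j) ∂μK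
          ≤ ∫⁻ x in ⋃ k : ℕ, Icc (2 ^ k * a) (2 ^ (k + 1) * a),
              ENNReal.ofReal (x ^ j) ∂μK := lintegral_mono_set hsub
        _ ≤ ∑' k : ℕ, ∫⁻ x in Icc (2 ^ k * a) (2 ^ (k + 1) * a),
              ENNReal.ofReal (x ^ j) ∂μK := lintegral_iUnion_le _ _
        _ ≤ ∑' k : ℕ, ENNReal.ofReal (D * r ^ k) := ENNReal.tsum_le_tsum piece
        _ ≤ ENNReal.ofReal (2 * D) := by
            have hsummable : Summable (fun k : ℕ => D * r ^ k) :=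
              (summable_geometric_of_lt_one hr0.le hr1).mul_left D
            rw [← ENNReal.ofReal_tsum_of_nonneg (fun k => by positivity) hsummable]
            apply ENNReal.ofReal_le_ofReal
            rw [tsum_mul_left, tsum_geometric_of_lt_one hr0.le hr1]
            have hinv : (1 - r)⁻¹ ≤ 2 := by
              rw [inv_le_comm₀ (by linarith) (by norm_num)]
              linarith
            nlinarith
    calc ENNReal.ofReal (t ^ n) * ∫⁻ x in Ici a, ENNReal.ofReal (x ^ j) ∂μK
        ≤ ENNReal.ofReal (t ^ n) * ENNReal.ofReal (2 * D) := mul_le_mul_right hsum _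
      _ = ENNReal.ofReal (t ^ n * (2 * D)) := (ENNReal.ofReal_mul (by positivity)).symm
      _ ≤ ENNReal.ofReal (E / t ^ 2) := by
          apply ENNReal.ofReal_le_ofReal
          have haj : a ^ j ≤ t ^ j :=
            pow_le_pow_left₀ hapos.le (by rw [hadef]; linarith) j
          have ham : a ^ m = t ^ m / 2 ^ m := by rw [hadef, div_pow]
          have htm : t ^ m = t ^ n * t ^ j * t ^ 2 := by
            rw [hm, pow_add, pow_add]
          rw [hDdef, hE, ham, htm, le_div_iff₀ (by positivity)]
          calc t ^ n * (2 * (M * C * 2 ^ (j + m) * a ^ j / (t ^ n * t ^ j * t ^ 2 / 2 ^ m))) * t ^ 2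
              ≤ t ^ n * (2 * (M * C * 2 ^ (j + m) * t ^ j / (t ^ n * t ^ j * t ^ 2 / 2 ^ m))) * t ^ 2 := by
                gcongr
            _ = 2 * (M * C) * 2 ^ (j + m) * 2 ^ m := by
                field_simp
  have hbound : Tendsto (fun t : ℝ => ENNReal.ofReal (E / t ^ 2)) atTop (nhds 0) := by
    rw [← ENNReal.ofReal_zero]
    apply ENNReal.tendsto_ofReal
    exact Tendsto.div_atTop tendsto_const_nhds (tendsto_pow_atTop two_ne_zero)
  exact tendsto_of_tendsto_of_tendsto_of_le_of_le' tendsto_const_nhds hbound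
    (Eventually.of_forall fun t => zero_le) key
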